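/- arXiv:2002.03636 — 2 statements merged into one kernel-verified Lean document; each statement's English description precedes it below -/
import Mathlib

section
/- Let d ≥ 1, k ≥ 0, n ≥ 1. Let (X_t)_{k<t≤k+n} be vectors in ℝ^d with ‖X_t‖ ≤ D_X, let (c_t)_{k<t≤k+n} be reals with 0 ≤ c_t ≤ h, let P_{k+1} be a positive definite d×d matrix, and define P_{t+1}⁻¹ = P_t⁻¹ + c_t·X_tX_tᵀ for k < t ≤ k+n. Then Σ_{t=k+1}^{k+n} Tr( P_{t+1}·(P_{t+1}⁻¹ − P_t⁻¹) ) ≤ d·ln( 1 + n·h·λ_max(P_{k+1})·D_X²/d ). -/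
open MeasureTheory ProbabilityTheory Matrix Real
open scoped ENNReal

/-- The largest eigenvalue of a (symmetric) matrix. -/
noncomputable def lambdaMax {d : ℕ} (M : Matrix (Fin d) (Fin d) ℝ) : ℝ :=
  sSup {r : ℝ | ∃ v : Fin d → ℝ, v ≠ 0 ∧ M.mulVec v = r • v}

/-- The Euclidean norm of a vector of `Fin d → ℝ`. -/
noncomputable def euclNorm {d : ℕ} (v : Fin d → ℝ) : ℝ :=
  Real.sqrt (∑ i, v i ^ 2)

section Aux

variable {d : ℕ}

lemma aux_sum_sq_pos {v : Fin d → ℝ} (hv : v ≠ 0) : 0 < ∑ i, v i ^ 2 := by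
  obtain ⟨i, hi⟩ := Function.ne_iff.mp hv
  exact Finset.sum_pos' (fun j _ => sq_nonneg _) ⟨i, Finset.mem_univ i, pow_two_pos_of_ne_zero hi⟩

lemma aux_dot_diagonal (f w : Fin d → ℝ) :
    w ⬝ᵥ ((diagonal f) *ᵥ w) = ∑ i, f i * w i ^ 2 := by
  simp only [dotProduct, mulVec_diagonal]
  exact Finset.sum_congr rfl fun i _ => by ring

lemma aux_trace_mul_vecMulVec (A : Matrix (Fin d) (Fin d) ℝ) (x y : Fin d → ℝ) :
    Matrix.trace (A * vecMulVec x y) = y ⬝ᵥ A.mulVec x := by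
  simp only [Matrix.trace, Matrix.diag_apply, mul_apply, vecMulVec_apply, dotProduct,
    Matrix.mulVec, Finset.mul_sum]
  exact Finset.sum_congr rfl fun i _ => Finset.sum_congr rfl fun j _ => by ring

lemma aux_mul_vecMulVec (A : Matrix (Fin d) (Fin d) ℝ) (x y : Fin d → ℝ) :
    A * vecMulVec x y = vecMulVec (A.mulVec x) y := by
  ext i j
  simp only [mul_apply, vecMulVec_apply, Matrix.mulVec, dotProduct, Finset.sum_mul]
  exact Finset.sum_congr rfl fun k _ => by ring

lemma aux_vecMulVec_mulVec (x y z : Fin d → ℝ) :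
    (vecMulVec x y) *ᵥ z = (y ⬝ᵥ z) • x := by
  ext i
  simp only [Matrix.mulVec, vecMulVec_apply, dotProduct, Pi.smul_apply, smul_eq_mul,
    Finset.sum_mul, Finset.mul_sum]
  exact Finset.sum_congr rfl fun k _ => by ring

lemma aux_det_one_add_vecMulVec (u v : Fin d → ℝ) :
    det (1 + vecMulVec u v) = 1 + v ⬝ᵥ u := by
  rw [vecMulVec_eq (Fin 1), det_one_add_replicateCol_mul_replicateRow]

lemma aux_step {A Q : Matrix (Fin d) (Fin d) ℝ} (hA : A.PosDef) (hQ : Q.PosDef)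
    {x : Fin d → ℝ} {c : ℝ} (hc : 0 ≤ c)
    (hrec : Q⁻¹ = A⁻¹ + c • vecMulVec x x) :
    Matrix.trace (Q * (Q⁻¹ - A⁻¹)) ≤ Real.log (det Q⁻¹) - Real.log (det A⁻¹) := by
  have hAdet : IsUnit A.det := isUnit_iff_ne_zero.mpr hA.det_pos.ne'
  have hQdet : IsUnit Q.det := isUnit_iff_ne_zero.mpr hQ.det_pos.ne'
  set q : ℝ := x ⬝ᵥ A.mulVec x with hqdef
  set q' : ℝ := x ⬝ᵥ Q.mulVec x with hq'def
  have hq0 : 0 ≤ q := by simpa using hA.posSemidef.dotProduct_mulVec_nonneg x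
  have hq'0 : 0 ≤ q' := by simpa using hQ.posSemidef.dotProduct_mulVec_nonneg x
  have hs0 : 0 ≤ c * q := mul_nonneg hc hq0
  have h1s : (0:ℝ) < 1 + c * q := by linarith
  have htr : Matrix.trace (Q * (Q⁻¹ - A⁻¹)) = c * q' := by
    rw [hrec, add_sub_cancel_left, Matrix.mul_smul, Matrix.trace_smul, smul_eq_mul,
      aux_trace_mul_vecMulVec]
  have h2 : A * Q⁻¹ = 1 + c • (A * vecMulVec x x) := by
    rw [hrec, Matrix.mul_add, Matrix.mul_nonsing_inv A hAdet, Matrix.mul_smul]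
  have h3 : (1 + c • (A * vecMulVec x x)) * Q = A := by
    rw [← h2, Matrix.mul_assoc, Matrix.nonsing_inv_mul Q hQdet, Matrix.mul_one]
  have h5 : x ⬝ᵥ ((A * vecMulVec x x * Q) *ᵥ x) = q * q' := by
    rw [aux_mul_vecMulVec, ← Matrix.mulVec_mulVec, aux_vecMulVec_mulVec, dotProduct_smul,
      smul_eq_mul, ← hq'def, ← hqdef]
    ring
  have h4 : q' + c * (q * q') = q := by
    have h := congrArg (fun M => x ⬝ᵥ M.mulVec x) h3
    simp only [Matrix.add_mul, Matrix.one_mul, Matrix.smul_mul, Matrix.add_mulVec,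
      Matrix.smul_mulVec, dotProduct_add, dotProduct_smul, smul_eq_mul] at h
    rw [h5] at h
    linarith [h]
  have h6 : det Q⁻¹ = det A⁻¹ * (1 + c * q) := by
    have heq : Q⁻¹ = A⁻¹ * (1 + c • (A * vecMulVec x x)) := by
      rw [Matrix.mul_add, Matrix.mul_one, Matrix.mul_smul, ← Matrix.mul_assoc,
        Matrix.nonsing_inv_mul A hAdet, Matrix.one_mul, hrec]
    rw [heq, det_mul]
    congr 1
    have heq2 : c • (A * vecMulVec x x) = vecMulVec (c • A.mulVec x) x := by
      rw [aux_mul_vecMulVec]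
      ext i j
      simp [vecMulVec_apply, mul_assoc]
    rw [heq2, aux_det_one_add_vecMulVec, dotProduct_smul, smul_eq_mul, ← hqdef]
  have hq'eq : c * q' = 1 - (1 + c * q)⁻¹ := by
    have hmain : c * q' * (1 + c * q) = c * q := by ring_nf; nlinarith [h4]
    field_simp
    linarith [hmain]
  have hlog : 1 - (1 + c * q)⁻¹ ≤ Real.log (1 + c * q) := by
    have h := Real.log_le_sub_one_of_pos (inv_pos.mpr h1s)
    rw [Real.log_inv] at h
    linarith
  have hdetAinv : (0:ℝ) < det A⁻¹ := hA.inv.det_pos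
  rw [htr, h6, Real.log_mul hdetAinv.ne' h1s.ne', hq'eq]
  linarith

lemma aux_quad_le_of_eig_le {B : Matrix (Fin d) (Fin d) ℝ} (hB : B.IsHermitian)
    {μ : ℝ} (hμ : ∀ i, hB.eigenvalues i ≤ μ) (x : Fin d → ℝ) :
    x ⬝ᵥ B.mulVec x ≤ μ * ∑ i, x i ^ 2 := by
  set U : Matrix (Fin d) (Fin d) ℝ := (hB.eigenvectorUnitary : Matrix (Fin d) (Fin d) ℝ) with hUdef
  have hU1 : U * star U = 1 := (Matrix.mem_unitaryGroup_iff).mp (hB.eigenvectorUnitary).2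
  have hstar : star U = Uᵀ := (conjTranspose_eq_transpose_of_trivial U)
  set w : Fin d → ℝ := (star U) *ᵥ x with hwdef
  have hvec : x ᵥ* U = w := by rw [hwdef, hstar, mulVec_transpose]
  have hquad : x ⬝ᵥ B.mulVec x = ∑ i, hB.eigenvalues i * w i ^ 2 := by
    conv_lhs => rw [hB.spectral_theorem, Unitary.conjStarAlgAut_apply]
    rw [← hUdef, ← Matrix.mulVec_mulVec, ← Matrix.mulVec_mulVec, dotProduct_mulVec, hvec,
      ← hwdef, RCLike.ofReal_real_eq_id]
    simpa using aux_dot_diagonal hB.eigenvalues w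
  have hnorm : ∑ i, w i ^ 2 = ∑ i, x i ^ 2 := by
    have h1 : w ⬝ᵥ w = x ⬝ᵥ x := by
      nth_rewrite 1 [← hvec]
      rw [← dotProduct_mulVec, hwdef, Matrix.mulVec_mulVec, hU1, Matrix.one_mulVec]
    simpa [dotProduct, pow_two] using h1
  rw [hquad, ← hnorm, Finset.mul_sum]
  exact Finset.sum_le_sum fun i _ => mul_le_mul_of_nonneg_right (hμ i) (sq_nonneg _)

lemma aux_lambdaMax (hd : 1 ≤ d) {B : Matrix (Fin d) (Fin d) ℝ} (hB : B.PosDef) :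
    0 < lambdaMax B ∧
    ∀ x : Fin d → ℝ, x ⬝ᵥ B.mulVec x ≤ lambdaMax B * ∑ i, x i ^ 2 := by
  haveI : Nonempty (Fin d) := Fin.pos_iff_nonempty.mp hd
  obtain ⟨i₀, -, hmax⟩ := Finset.exists_max_image Finset.univ hB.1.eigenvalues Finset.univ_nonempty
  have hmax' : ∀ i, hB.1.eigenvalues i ≤ hB.1.eigenvalues i₀ := fun i => hmax i (Finset.mem_univ i)
  have hmem : hB.1.eigenvalues i₀ ∈
      {r : ℝ | ∃ v : Fin d → ℝ, v ≠ 0 ∧ B.mulVec v = r • v} := by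
    refine ⟨hB.1.eigenvectorBasis i₀, ?_, hB.1.mulVec_eigenvectorBasis i₀⟩
    intro h0
    exact hB.1.eigenvectorBasis.orthonormal.ne_zero i₀ (by ext j; exact congrFun h0 j)
  have hub : ∀ r ∈ {r : ℝ | ∃ v : Fin d → ℝ, v ≠ 0 ∧ B.mulVec v = r • v},
      r ≤ hB.1.eigenvalues i₀ := by
    rintro r ⟨v, hv, hEv⟩
    have hvv : 0 < ∑ i, v i ^ 2 := aux_sum_sq_pos hv
    have h1 : v ⬝ᵥ B.mulVec v = r * ∑ i, v i ^ 2 := by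
      rw [hEv, dotProduct_smul, smul_eq_mul]
      congr 1
      simp [dotProduct, pow_two]
    have h2 := aux_quad_le_of_eig_le hB.1 hmax' v
    rw [h1] at h2
    exact le_of_mul_le_mul_right h2 hvv
  have hsup : lambdaMax B = hB.1.eigenvalues i₀ :=
    le_antisymm (csSup_le ⟨_, hmem⟩ hub) (le_csSup ⟨_, hub⟩ hmem)
  rw [hsup]
  exact ⟨hB.eigenvalues_pos i₀, fun x => aux_quad_le_of_eig_le hB.1 hmax' x⟩

lemma aux_telescope (g : ℕ → ℝ) (k n : ℕ) :
    ∑ t ∈ Finset.Icc (k + 1) (k + n), (g (t + 1) - g t) = g (k + n + 1) - g (k + 1) := by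
  induction n with
  | zero => simp
  | succ m ih =>
      rw [show k + (m + 1) = (k + m) + 1 by ring, Finset.sum_Icc_succ_top (by omega), ih]
      ring

lemma aux_trace_eq_sum_eigenvalues {M : Matrix (Fin d) (Fin d) ℝ} (hM : M.IsHermitian) :
    Matrix.trace M = ∑ i, hM.eigenvalues i := by
  have hU' : star (hM.eigenvectorUnitary : Matrix (Fin d) (Fin d) ℝ) *
      (hM.eigenvectorUnitary : Matrix (Fin d) (Fin d) ℝ) = 1 :=
    (Matrix.mem_unitaryGroup_iff').mp (hM.eigenvectorUnitary).2
  conv_lhs => rw [hM.spectral_theorem, Unitary.conjStarAlgAut_apply]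
  rw [Matrix.trace_mul_cycle, hU', Matrix.one_mul, RCLike.ofReal_real_eq_id]
  simp [Matrix.trace_diagonal]

lemma aux_det_eq_prod_eigenvalues {M : Matrix (Fin d) (Fin d) ℝ} (hM : M.IsHermitian) :
    det M = ∏ i, hM.eigenvalues i := by
  simpa using hM.det_eq_prod_eigenvalues

lemma aux_trace_pos (hd : 1 ≤ d) {M : Matrix (Fin d) (Fin d) ℝ} (hM : M.PosDef) :
    0 < Matrix.trace M := by
  haveI : Nonempty (Fin d) := Fin.pos_iff_nonempty.mp hd
  rw [aux_trace_eq_sum_eigenvalues hM.1]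
  exact Finset.sum_pos (fun i _ => hM.eigenvalues_pos i) Finset.univ_nonempty

lemma aux_log_det_le (hd : 1 ≤ d) {M : Matrix (Fin d) (Fin d) ℝ} (hM : M.PosDef) :
    Real.log (det M) ≤ d * Real.log (Matrix.trace M / d) := by
  haveI : Nonempty (Fin d) := Fin.pos_iff_nonempty.mp hd
  have hd0 : (0:ℝ) < d := by exact_mod_cast hd
  set f := hM.1.eigenvalues with hf
  have hfp : ∀ i, 0 < f i := fun i => hM.eigenvalues_pos i
  have htr : Matrix.trace M = ∑ i, f i := aux_trace_eq_sum_eigenvalues hM.1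
  have htrpos : 0 < Matrix.trace M := by
    rw [htr]; exact Finset.sum_pos (fun i _ => hfp i) Finset.univ_nonempty
  set m := Matrix.trace M / d with hm
  have hmpos : 0 < m := div_pos htrpos hd0
  have hlog : Real.log (det M) = ∑ i, Real.log (f i) := by
    rw [aux_det_eq_prod_eigenvalues hM.1, Real.log_prod fun i _ => (hfp i).ne']
  have key : ∀ i, Real.log (f i) ≤ Real.log m + f i / m - 1 := by
    intro i
    have h := Real.log_le_sub_one_of_pos (div_pos (hfp i) hmpos)
    rw [Real.log_div (hfp i).ne' hmpos.ne'] at h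
    linarith
  have hsum : ∑ i, (Real.log m + f i / m - 1) = d * Real.log m := by
    rw [Finset.sum_sub_distrib, Finset.sum_add_distrib, Finset.sum_const, Finset.sum_const,
      ← Finset.sum_div, ← htr, Finset.card_univ, Fintype.card_fin]
    rw [hm]
    field_simp
    simp only [nsmul_eq_mul]; ring
  calc Real.log (det M) = ∑ i, Real.log (f i) := hlog
    _ ≤ ∑ i, (Real.log m + f i / m - 1) := Finset.sum_le_sum fun i _ => key i
    _ = d * Real.log m := hsum

lemma aux_conj_posDef {S C : Matrix (Fin d) (Fin d) ℝ} (hS : S.IsHermitian)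
    (hSdet : det S ≠ 0) (hC : C.PosDef) : (S * C * S).PosDef := by
  rw [Matrix.posDef_iff_dotProduct_mulVec]
  constructor
  · rw [Matrix.IsHermitian, conjTranspose_mul, conjTranspose_mul, hS.eq, hC.1.eq, Matrix.mul_assoc]
  · intro x hx
    have hSx : S *ᵥ x ≠ 0 := by
      intro h0
      apply hx
      have h1 := congrArg (fun v => S⁻¹ *ᵥ v) h0
      simpa [Matrix.mulVec_mulVec, Matrix.nonsing_inv_mul S (isUnit_iff_ne_zero.mpr hSdet)]
        using h1
    have hS' : x ᵥ* S = S *ᵥ x := by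
      rw [← Matrix.mulVec_transpose]
      rw [← conjTranspose_eq_transpose_of_trivial, hS.eq]
    have h2 := hC.dotProduct_mulVec_pos hSx
    simpa [← Matrix.mulVec_mulVec, dotProduct_mulVec, hS', star_trivial] using h2

end Aux

/-- **Lemma (telescoping trace bound).** Let `d ≥ 1`, `k ≥ 0`, `n ≥ 1`. For vectors
`X_t` with `‖X_t‖ ≤ D_X`, scalars `0 ≤ c_t ≤ h`, positive definite `P_{k+1}` and the recursion
`P_{t+1}⁻¹ = P_t⁻¹ + c_t X_t X_tᵀ` (with each `P_t` positive definite), one has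
`∑_{t=k+1}^{k+n} Tr(P_{t+1}(P_{t+1}⁻¹ − P_t⁻¹)) ≤ d ln(1 + n h λ_max(P_{k+1}) D_X²/d)`. -/
theorem sum_trace_log_bound {d : ℕ} (hd : 1 ≤ d) (k n : ℕ) (hn : 1 ≤ n)
    (X : ℕ → Fin d → ℝ) (c : ℕ → ℝ) (DX h : ℝ)
    (hX : ∀ t ∈ Finset.Icc (k + 1) (k + n), euclNorm (X t) ≤ DX)
    (hc : ∀ t ∈ Finset.Icc (k + 1) (k + n), 0 ≤ c t ∧ c t ≤ h)
    (P : ℕ → Matrix (Fin d) (Fin d) ℝ)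
    (hPD : ∀ t ∈ Finset.Icc (k + 1) (k + n + 1), (P t).PosDef)
    (hrec : ∀ t ∈ Finset.Icc (k + 1) (k + n),
      (P (t + 1))⁻¹ = (P t)⁻¹ + c t • vecMulVec (X t) (X t)) :
    ∑ t ∈ Finset.Icc (k + 1) (k + n),
        Matrix.trace (P (t + 1) * ((P (t + 1))⁻¹ - (P t)⁻¹))
      ≤ d * Real.log (1 + n * h * lambdaMax (P (k + 1)) * DX ^ 2 / d) := by
  have hd0 : (0:ℝ) < d := by exact_mod_cast hd
  have hk1 : k + 1 ∈ Finset.Icc (k + 1) (k + n) := by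
    rw [Finset.mem_Icc]; omega
  have hB : (P (k + 1)).PosDef := hPD (k + 1) (by rw [Finset.mem_Icc]; omega)
  have hdetB : 0 < det (P (k + 1)) := hB.det_pos
  obtain ⟨hLpos, hLquad⟩ := aux_lambdaMax hd hB
  have hh0 : 0 ≤ h := (hc (k + 1) hk1).1.trans (hc (k + 1) hk1).2
  have hDX0 : 0 ≤ DX := by
    refine le_trans ?_ (hX (k + 1) hk1)
    unfold euclNorm
    positivity
  -- Step 1: per-step bound and telescoping
  have hstep : ∀ t ∈ Finset.Icc (k + 1) (k + n),
      Matrix.trace (P (t + 1) * ((P (t + 1))⁻¹ - (P t)⁻¹))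
        ≤ Real.log (det (P (t + 1))⁻¹) - Real.log (det (P t)⁻¹) := by
    intro t ht
    rw [Finset.mem_Icc] at ht
    exact aux_step (hPD t (by rw [Finset.mem_Icc]; omega))
      (hPD (t + 1) (by rw [Finset.mem_Icc]; omega))
      (hc t (by rw [Finset.mem_Icc]; omega)).1 (hrec t (by rw [Finset.mem_Icc]; omega))
  have h1 : ∑ t ∈ Finset.Icc (k + 1) (k + n),
      Matrix.trace (P (t + 1) * ((P (t + 1))⁻¹ - (P t)⁻¹))
      ≤ Real.log (det (P (k + n + 1))⁻¹) - Real.log (det (P (k + 1))⁻¹) := by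
    calc ∑ t ∈ Finset.Icc (k + 1) (k + n),
        Matrix.trace (P (t + 1) * ((P (t + 1))⁻¹ - (P t)⁻¹))
        ≤ ∑ t ∈ Finset.Icc (k + 1) (k + n),
          (Real.log (det (P (t + 1))⁻¹) - Real.log (det (P t)⁻¹)) :=
        Finset.sum_le_sum hstep
      _ = _ := aux_telescope (fun t => Real.log (det (P t)⁻¹)) k n
  -- Step 2: the recursion summed up
  have hrecsum : ∀ m, m ≤ n → (P (k + m + 1))⁻¹
      = (P (k + 1))⁻¹ + ∑ t ∈ Finset.Icc (k + 1) (k + m), c t • vecMulVec (X t) (X t) := by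
    intro m
    induction m with
    | zero => intro _; simp
    | succ j ih =>
        intro hj
        have hmem : k + j + 1 ∈ Finset.Icc (k + 1) (k + n) := by rw [Finset.mem_Icc]; omega
        have : (P (k + j + 1 + 1))⁻¹ = (P (k + j + 1))⁻¹
            + c (k + j + 1) • vecMulVec (X (k + j + 1)) (X (k + j + 1)) := hrec _ hmem
        rw [show k + (j + 1) = k + j + 1 from rfl, this, ih (by omega),
          Finset.sum_Icc_succ_top (by omega : k + 1 ≤ k + j + 1), add_assoc]
  have hCrep := hrecsum n le_rfl
  -- Step 3: conjugated matrix
  have hC : ((P (k + n + 1))⁻¹).PosDef := (hPD (k + n + 1) (by rw [Finset.mem_Icc]; omega)).inv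
  have hdetC : 0 < det (P (k + n + 1))⁻¹ := hC.det_pos
  set S := (open scoped MatrixOrder in CFC.sqrt (P (k + 1))) with hSdef
  have hSH : S.IsHermitian := open scoped MatrixOrder in (CFC.sqrt_nonneg (P (k + 1))).posSemidef.1
  have hSS : S * S = P (k + 1) :=
    open scoped MatrixOrder in CFC.sqrt_mul_sqrt_self _ hB.posSemidef.nonneg
  have hdetS : det S ≠ 0 := by
    intro h0
    rw [← hSS, det_mul, h0, mul_zero] at hdetB
    exact lt_irrefl _ hdetB
  have hM : (S * (P (k + n + 1))⁻¹ * S).PosDef := aux_conj_posDef hSH hdetS hC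
  have hdetM : det (S * (P (k + n + 1))⁻¹ * S) = det (P (k + n + 1))⁻¹ * det (P (k + 1)) := by
    rw [det_mul, det_mul, ← hSS, det_mul]; ring
  have htrM : Matrix.trace (S * (P (k + n + 1))⁻¹ * S)
      = Matrix.trace ((P (k + n + 1))⁻¹ * P (k + 1)) := by
    rw [Matrix.trace_mul_cycle, hSS, Matrix.trace_mul_comm]
  -- Step 4: trace bound
  have htrCB : Matrix.trace ((P (k + n + 1))⁻¹ * P (k + 1))
      = d + ∑ t ∈ Finset.Icc (k + 1) (k + n), c t * (X t ⬝ᵥ (P (k + 1)).mulVec (X t)) := by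
    rw [hCrep, Matrix.add_mul, Matrix.trace_add,
      Matrix.nonsing_inv_mul (P (k + 1)) (isUnit_iff_ne_zero.mpr hdetB.ne'),
      Matrix.trace_one, Finset.sum_mul, Matrix.trace_sum]
    congr 1
    · simp
    · exact Finset.sum_congr rfl fun t ht => by
        rw [Matrix.smul_mul, Matrix.trace_smul, smul_eq_mul, Matrix.trace_mul_comm,
          aux_trace_mul_vecMulVec]
  have hterm : ∀ t ∈ Finset.Icc (k + 1) (k + n),
      c t * (X t ⬝ᵥ (P (k + 1)).mulVec (X t)) ≤ h * (lambdaMax (P (k + 1)) * DX ^ 2) := by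
    intro t ht
    have hq0 : 0 ≤ X t ⬝ᵥ (P (k + 1)).mulVec (X t) := by simpa using hB.posSemidef.dotProduct_mulVec_nonneg (X t)
    have hsq : ∑ i, X t i ^ 2 ≤ DX ^ 2 := by
      have h1 := hX t ht
      unfold euclNorm at h1
      have h2 : 0 ≤ ∑ i, X t i ^ 2 := Finset.sum_nonneg fun i _ => sq_nonneg _
      calc ∑ i, X t i ^ 2 = Real.sqrt (∑ i, X t i ^ 2) ^ 2 := (Real.sq_sqrt h2).symm
        _ ≤ DX ^ 2 := pow_le_pow_left₀ (Real.sqrt_nonneg _) h1 2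
    have hquad : X t ⬝ᵥ (P (k + 1)).mulVec (X t) ≤ lambdaMax (P (k + 1)) * DX ^ 2 :=
      (hLquad (X t)).trans (mul_le_mul_of_nonneg_left hsq hLpos.le)
    exact mul_le_mul (hc t ht).2 hquad hq0 hh0
  have htrbound : Matrix.trace ((P (k + n + 1))⁻¹ * P (k + 1))
      ≤ d + n * h * lambdaMax (P (k + 1)) * DX ^ 2 := by
    rw [htrCB]
    have hsum := Finset.sum_le_sum hterm
    rw [Finset.sum_const, Nat.card_Icc, show k + n + 1 - (k + 1) = n by omega,
      nsmul_eq_mul] at hsum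
    nlinarith [hsum]
  -- Step 5: put everything together
  have hlogBinv : Real.log (det (P (k + 1))⁻¹) = - Real.log (det (P (k + 1))) := by
    rw [Matrix.det_nonsing_inv, Ring.inverse_eq_inv, Real.log_inv]
  have e1 : Real.log (det (P (k + n + 1))⁻¹) - Real.log (det (P (k + 1))⁻¹)
      = Real.log (det (S * (P (k + n + 1))⁻¹ * S)) := by
    rw [hlogBinv, hdetM, Real.log_mul hdetC.ne' hdetB.ne']
    ring
  have htrpos : 0 < Matrix.trace (S * (P (k + n + 1))⁻¹ * S) := aux_trace_pos hd hM
  have e3 : Real.log (Matrix.trace (S * (P (k + n + 1))⁻¹ * S) / d)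
      ≤ Real.log (1 + n * h * lambdaMax (P (k + 1)) * DX ^ 2 / d) := by
    apply Real.log_le_log (div_pos htrpos hd0)
    have e4 : (1 : ℝ) + n * h * lambdaMax (P (k + 1)) * DX ^ 2 / d
        = (d + n * h * lambdaMax (P (k + 1)) * DX ^ 2) / d := by
      field_simp
    rw [e4]
    have h5 : Matrix.trace (S * (P (k + n + 1))⁻¹ * S)
        ≤ d + n * h * lambdaMax (P (k + 1)) * DX ^ 2 := by
      rw [htrM]; exact htrbound
    exact (div_le_div_iff_of_pos_right hd0).mpr h5
  have e2 := aux_log_det_le hd hM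
  calc ∑ t ∈ Finset.Icc (k + 1) (k + n),
      Matrix.trace (P (t + 1) * ((P (t + 1))⁻¹ - (P t)⁻¹))
      ≤ Real.log (det (P (k + n + 1))⁻¹) - Real.log (det (P (k + 1))⁻¹) := h1
    _ = Real.log (det (S * (P (k + n + 1))⁻¹ * S)) := e1
    _ ≤ d * Real.log (Matrix.trace (S * (P (k + n + 1))⁻¹ * S) / d) := e2
    _ ≤ d * Real.log (1 + n * h * lambdaMax (P (k + 1)) * DX ^ 2 / d) :=
        mul_le_mul_of_nonneg_left e3 hd0.le
end

section
/- In the logistic setting, suppose θ* minimizes the risk L. For any ε > 0 and any θ ∈ ℝ^d: if ‖θ − θ*‖ > ε, then L(θ) − L(θ*) > Λ_min·ε² / ( 4·(1 + e^{D_X(‖θ*‖ + ε)}) ). -/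
open MeasureTheory ProbabilityTheory Matrix Real
open scoped ENNReal

/-- The smallest eigenvalue of a (symmetric) matrix. -/
noncomputable def lambdaMin {d : ℕ} (M : Matrix (Fin d) (Fin d) ℝ) : ℝ :=
  sInf {r : ℝ | ∃ v : Fin d → ℝ, v ≠ 0 ∧ M.mulVec v = r • v}

section Aux

noncomputable def lf (s : ℝ) : ℝ := Real.log (1 + Real.exp (-s))

lemma one_add_exp_pos (s : ℝ) : (0:ℝ) < 1 + Real.exp s := by positivity



lemma lambdaMin_quadform {d : ℕ} (hd : 1 ≤ d) (M : Matrix (Fin d) (Fin d) ℝ)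
    (hsym : M.IsHermitian) (v : Fin d → ℝ) :
    lambdaMin M * (∑ i, v i ^ 2) ≤ v ⬝ᵥ M.mulVec v := by
  haveI : Nonempty (Fin d) := ⟨⟨0, hd⟩⟩
  set E := EuclideanSpace ℝ (Fin d)
  haveI : Nontrivial E := by
    refine nontrivial_of_ne ((WithLp.equiv 2 _).symm (fun _ => (1:ℝ)))
      ((WithLp.equiv 2 _).symm 0) ?_
    intro h
    have := congrFun ((WithLp.equiv 2 (Fin d → ℝ)).symm.injective h) ⟨0, hd⟩
    simp at this
  set T : E →ₗ[ℝ] E := Matrix.toEuclideanLin M with hT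
  have hTsym : T.IsSymmetric := (Matrix.isHermitian_iff_isSymmetric).1 hsym
  set Tc : E →L[ℝ] E := LinearMap.toContinuousLinearMap T with hTc
  have hTcT : ∀ x : E, Tc x = T x := fun _ => rfl
  -- T applied to equiv
  have hTapp : ∀ w : Fin d → ℝ,
      T ((WithLp.equiv 2 (Fin d → ℝ)).symm w) = (WithLp.equiv 2 (Fin d → ℝ)).symm (M.mulVec w) :=
    fun w => Matrix.toEuclideanLin_apply_piLp_toLp M w
  -- inner products
  have hinner : ∀ x : E, (inner ℝ (T x) x : ℝ)
      = (WithLp.equiv 2 (Fin d → ℝ) (T x)) ⬝ᵥ (WithLp.equiv 2 (Fin d → ℝ) x) := by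
    intro x
    rw [PiLp.inner_apply]
    simp only [RCLike.inner_apply, conj_trivial, dotProduct, WithLp.equiv_apply]
    exact Finset.sum_congr rfl fun _ _ => mul_comm _ _
  -- bound for members of the eigen-set
  have hbound : ∀ r ∈ {r : ℝ | ∃ v : Fin d → ℝ, v ≠ 0 ∧ M.mulVec v = r • v}, -‖Tc‖ ≤ r := by
    rintro r ⟨w, hw0, hww⟩
    set x : E := (WithLp.equiv 2 (Fin d → ℝ)).symm w with hx
    have hx0 : x ≠ 0 := by
      intro h; apply hw0; simpa [hx] using congrArg (WithLp.equiv 2 (Fin d → ℝ)) h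
    have hTx : T x = r • x := by
      rw [hx, hTapp, hww]; simp
    have h1 : (inner ℝ (T x) x : ℝ) = r * ‖x‖ ^ 2 := by
      rw [hTx, real_inner_smul_left, real_inner_self_eq_norm_sq]
    have h2 : |(inner ℝ (T x) x : ℝ)| ≤ ‖Tc‖ * ‖x‖ ^ 2 := by
      calc |(inner ℝ (T x) x : ℝ)| ≤ ‖T x‖ * ‖x‖ := abs_real_inner_le_norm _ _
        _ = ‖Tc x‖ * ‖x‖ := rfl
        _ ≤ (‖Tc‖ * ‖x‖) * ‖x‖ := by
            gcongr; exact Tc.le_opNorm x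
        _ = ‖Tc‖ * ‖x‖ ^ 2 := by ring
    have hxpos : (0:ℝ) < ‖x‖ ^ 2 := pow_pos (norm_pos_iff.2 hx0) 2
    nlinarith [neg_abs_le (inner ℝ (T x) x : ℝ)]
  have hbdd : BddBelow {r : ℝ | ∃ v : Fin d → ℝ, v ≠ 0 ∧ M.mulVec v = r • v} :=
    ⟨-‖Tc‖, hbound⟩
  -- the infimum Rayleigh eigenvalue
  set r0 : ℝ := ⨅ x : { x : E // x ≠ 0 }, RCLike.re (inner ℝ (T x) (x:E) : ℝ) / ‖(x : E)‖ ^ 2 with hr0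
  have hev : Module.End.HasEigenvalue T r0 := by
    exact hTsym.hasEigenvalue_iInf_of_finiteDimensional
  obtain ⟨v₀, hv₀⟩ := hev.exists_hasEigenvector
  have hr0mem : r0 ∈ {r : ℝ | ∃ v : Fin d → ℝ, v ≠ 0 ∧ M.mulVec v = r • v} := by
    refine ⟨WithLp.equiv 2 (Fin d → ℝ) v₀, by simpa using hv₀.right, ?_⟩
    have := hv₀.apply_eq_smul
    have h2 : T ((WithLp.equiv 2 (Fin d → ℝ)).symm (WithLp.equiv 2 (Fin d → ℝ) v₀))
        = r0 • v₀ := by simpa using this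
    rw [hTapp] at h2
    have := congrArg (WithLp.equiv 2 (Fin d → ℝ)) h2
    simp at this; exact this
  have hlam_le : lambdaMin M ≤ r0 := csInf_le hbdd hr0mem
  -- now the quadratic form bound
  rcases eq_or_ne v 0 with rfl | hv0
  · simp [lambdaMin]
  · set x : E := (WithLp.equiv 2 (Fin d → ℝ)).symm v with hx
    have hx0 : x ≠ 0 := by
      intro h; apply hv0; simpa [hx] using congrArg (WithLp.equiv 2 (Fin d → ℝ)) h
    have hxnorm : ‖x‖ ^ 2 = ∑ i, v i ^ 2 := by
      rw [← real_inner_self_eq_norm_sq, hx, PiLp.inner_apply]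
      simp only [RCLike.inner_apply, conj_trivial, WithLp.equiv_symm_apply, PiLp.toLp_apply, ← sq]
    have hbddr : BddBelow (Set.range fun x : { x : E // x ≠ 0 } =>
        RCLike.re (inner ℝ (T x) (x:E) : ℝ) / ‖(x : E)‖ ^ 2) := by
      refine ⟨-‖Tc‖, ?_⟩
      rintro _ ⟨⟨z, hz⟩, rfl⟩
      have hzpos : (0:ℝ) < ‖z‖ ^ 2 := pow_pos (norm_pos_iff.2 hz) 2
      have h2 : |(inner ℝ (T z) z : ℝ)| ≤ ‖Tc‖ * ‖z‖ ^ 2 := by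
        calc |(inner ℝ (T z) z : ℝ)| ≤ ‖T z‖ * ‖z‖ := abs_real_inner_le_norm _ _
          _ = ‖Tc z‖ * ‖z‖ := rfl
          _ ≤ (‖Tc‖ * ‖z‖) * ‖z‖ := by gcongr; exact Tc.le_opNorm z
          _ = ‖Tc‖ * ‖z‖ ^ 2 := by ring
      simp only [RCLike.re_to_real]
      rw [le_div_iff₀ hzpos]
      nlinarith [neg_abs_le (inner ℝ (T z) z : ℝ)]
    have hr0le : r0 ≤ RCLike.re (inner ℝ (T x) x : ℝ) / ‖x‖ ^ 2 :=
      ciInf_le hbddr ⟨x, hx0⟩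
    have hxpos : (0:ℝ) < ‖x‖ ^ 2 := pow_pos (norm_pos_iff.2 hx0) 2
    have key : lambdaMin M * ‖x‖ ^ 2 ≤ (inner ℝ (T x) x : ℝ) := by
      simp only [RCLike.re_to_real] at hr0le
      rw [le_div_iff₀ hxpos] at hr0le
      nlinarith
    have hTxinner : (inner ℝ (T x) x : ℝ) = v ⬝ᵥ M.mulVec v := by
      rw [hinner, hx, hTapp]
      simp [dotProduct_comm]
    rw [hxnorm, hTxinner] at key
    exact key




lemma euclNorm_eq {d : ℕ} (v : Fin d → ℝ) :
    euclNorm v = ‖(WithLp.equiv 2 (Fin d → ℝ)).symm v‖ := by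
  rw [EuclideanSpace.norm_eq, euclNorm]
  congr 1
  refine Finset.sum_congr rfl fun i _ => ?_
  rw [WithLp.equiv_symm_apply, PiLp.toLp_apply, Real.norm_eq_abs, sq_abs]

lemma euclNorm_nonneg {d : ℕ} (v : Fin d → ℝ) : 0 ≤ euclNorm v := Real.sqrt_nonneg _

lemma euclNorm_sq {d : ℕ} (v : Fin d → ℝ) : euclNorm v ^ 2 = ∑ i, v i ^ 2 :=
  Real.sq_sqrt (by positivity)

lemma abs_dotProduct_le {d : ℕ} (v w : Fin d → ℝ) :
    |v ⬝ᵥ w| ≤ euclNorm v * euclNorm w := by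
  have h := abs_real_inner_le_norm ((WithLp.equiv 2 (Fin d → ℝ)).symm v)
    ((WithLp.equiv 2 (Fin d → ℝ)).symm w)
  rw [PiLp.inner_apply] at h
  simp only [RCLike.inner_apply, conj_trivial, WithLp.equiv_symm_apply, PiLp.toLp_apply] at h
  rw [euclNorm_eq, euclNorm_eq]
  rw [dotProduct_comm]; exact h

lemma euclNorm_add_le {d : ℕ} (v w : Fin d → ℝ) :
    euclNorm (v + w) ≤ euclNorm v + euclNorm w := by
  rw [euclNorm_eq, euclNorm_eq, euclNorm_eq]
  rw [show (WithLp.equiv 2 (Fin d → ℝ)).symm (v + w)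
      = (WithLp.equiv 2 (Fin d → ℝ)).symm v + (WithLp.equiv 2 (Fin d → ℝ)).symm w from rfl]
  exact norm_add_le _ _

lemma euclNorm_smul {d : ℕ} (t : ℝ) (v : Fin d → ℝ) :
    euclNorm (t • v) = |t| * euclNorm v := by
  rw [euclNorm_eq, euclNorm_eq]
  rw [show (WithLp.equiv 2 (Fin d → ℝ)).symm (t • v)
      = t • (WithLp.equiv 2 (Fin d → ℝ)).symm v from rfl]
  rw [norm_smul, Real.norm_eq_abs]

lemma abs_apply_le_euclNorm {d : ℕ} (v : Fin d → ℝ) (i : Fin d) : |v i| ≤ euclNorm v := by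
  rw [← Real.sqrt_sq_eq_abs, euclNorm]
  apply Real.sqrt_le_sqrt
  exact Finset.single_le_sum (fun j _ => sq_nonneg (v j)) (Finset.mem_univ i)


lemma lf_nonneg (s : ℝ) : 0 ≤ lf s :=
  Real.log_nonneg (by have := Real.exp_pos (-s); linarith)

lemma lf_le (s : ℝ) : lf s ≤ Real.log 2 + |s| := by
  have h1 : 1 + Real.exp (-s) ≤ 2 * Real.exp |s| := by
    have e1 : (1:ℝ) ≤ Real.exp |s| := by
      rw [← Real.exp_zero]; exact Real.exp_le_exp.2 (abs_nonneg s)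
    have e2 : Real.exp (-s) ≤ Real.exp |s| := Real.exp_le_exp.2 (neg_le_abs s)
    linarith
  calc lf s ≤ Real.log (2 * Real.exp |s|) :=
        Real.log_le_log (by positivity) h1
    _ = Real.log 2 + |s| := by rw [Real.log_mul (by norm_num) (Real.exp_ne_zero _), Real.log_exp]




lemma lf_hasDerivAt (s : ℝ) : HasDerivAt lf (-(1 + Real.exp s)⁻¹) s := by
  have h1 : HasDerivAt (fun s : ℝ => 1 + Real.exp (-s)) (-Real.exp (-s)) s := by
    have := (Real.hasDerivAt_exp (-s)).comp s (hasDerivAt_neg s)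
    simpa using this.const_add 1
  have h2 := h1.log (by positivity)
  refine h2.congr_deriv ?_
  rw [Real.exp_neg]
  have hpos := Real.exp_pos s
  field_simp
  ring
lemma lf_deriv2 (s : ℝ) :
    HasDerivAt (fun s : ℝ => -(1 + Real.exp s)⁻¹) (Real.exp s / (1 + Real.exp s) ^ 2) s := by
  have h1 : HasDerivAt (fun s : ℝ => 1 + Real.exp s) (Real.exp s) s := by
    simpa using (Real.hasDerivAt_exp s).const_add 1
  have h2 := (h1.inv (one_add_exp_pos s).ne')
  have := h2.neg
  refine this.congr_deriv ?_
  ring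

lemma lf_convexOn : ConvexOn ℝ Set.univ lf := by
  have hdiff : ∀ s, HasDerivAt lf (-(1 + Real.exp s)⁻¹) s := lf_hasDerivAt
  have hderiv : deriv lf = fun s => -(1 + Real.exp s)⁻¹ := funext fun s => (hdiff s).deriv
  apply convexOn_of_deriv2_nonneg convex_univ
  · exact (fun s _ => (hdiff s).differentiableAt.continuousAt.continuousWithinAt)
  · exact fun s _ => (hdiff s).differentiableAt.differentiableWithinAt
  · intro s _
    rw [hderiv]
    exact (lf_deriv2 s).differentiableAt.differentiableWithinAt
  · intro s _
    show 0 ≤ deriv (deriv lf) s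
    rw [hderiv, (lf_deriv2 s).deriv]
    positivity

lemma lf_strong (Mb : ℝ) (hMb : 0 < Mb) {s t a b : ℝ}
    (hs : |s| ≤ Mb) (ht : |t| ≤ Mb) (ha : 0 ≤ a) (hb : 0 ≤ b) (hab : a + b = 1) :
    lf (a*s + b*t) + (2*(1+Real.exp Mb))⁻¹/2 * (a*b*(s-t)^2)
      ≤ a * lf s + b * lf t := by
  set c : ℝ := (2*(1+Real.exp Mb))⁻¹ with hc
  set g : ℝ → ℝ := fun s => lf s - c/2 * s^2 with hg
  have hgd : ∀ s, HasDerivAt g (-(1 + Real.exp s)⁻¹ - c * s) s := by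
    intro s
    have h2 : HasDerivAt (fun s : ℝ => c/2 * s^2) (c * s) s := by
      have := (hasDerivAt_pow 2 s).const_mul (c/2)
      refine this.congr_deriv ?_
      ring
    exact (lf_hasDerivAt s).sub h2
  have hderivg : deriv g = fun s => -(1 + Real.exp s)⁻¹ - c * s := funext fun s => (hgd s).deriv
  have hgd2 : ∀ s, HasDerivAt (fun u => -(1 + Real.exp u)⁻¹ - c * u)
      (Real.exp s / (1 + Real.exp s) ^ 2 - c) s := by
    intro s
    have : HasDerivAt (fun u : ℝ => c * u) c s := by simpa using (hasDerivAt_id s).const_mul c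
    exact (lf_deriv2 s).sub this
  have hconv : ConvexOn ℝ (Set.Icc (-Mb) Mb) g := by
    apply convexOn_of_deriv2_nonneg (convex_Icc _ _)
    · exact fun s _ => (hgd s).differentiableAt.continuousAt.continuousWithinAt
    · exact fun s _ => (hgd s).differentiableAt.differentiableWithinAt
    · intro s _
      rw [hderivg]
      exact (hgd2 s).differentiableAt.differentiableWithinAt
    · intro s hsmem
      show 0 ≤ deriv (deriv g) s
      rw [hderivg, (hgd2 s).deriv, sub_nonneg, hc]
      rw [interior_Icc] at hsmem
      obtain ⟨h1, h2⟩ := hsmem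
      have e1 : (1:ℝ) ≤ Real.exp (Mb + s) := by
        rw [← Real.exp_zero]; exact Real.exp_le_exp.2 (by linarith)
      have e2 : Real.exp (2*s) ≤ Real.exp (Mb + s) := Real.exp_le_exp.2 (by linarith)
      rw [Real.exp_add] at e1 e2
      have e3 : Real.exp (2*s) = Real.exp s * Real.exp s := by
        rw [two_mul, Real.exp_add]
      rw [inv_eq_one_div, div_le_div_iff₀ (by positivity) (by positivity)]
      nlinarith [e1, e2, e3, Real.exp_pos s, Real.exp_pos Mb]
  have hsmem' : s ∈ Set.Icc (-Mb) Mb := by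
    rcases abs_le.1 hs with ⟨h1, h2⟩; exact ⟨h1, h2⟩
  have htmem' : t ∈ Set.Icc (-Mb) Mb := by
    rcases abs_le.1 ht with ⟨h1, h2⟩; exact ⟨h1, h2⟩
  have hineq := hconv.2 hsmem' htmem' ha hb hab
  simp only [hg, smul_eq_mul] at hineq
  have hid : a*s^2 + b*t^2 - (a*s+b*t)^2 = a*b*(s-t)^2 := by
    have hb' : b = 1 - a := by linarith
    subst hb'; ring
  have hid2 : c/2 * (a*b*(s-t)^2) = c/2*(a*s^2+b*t^2) - c/2*(a*s+b*t)^2 := by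
    rw [← hid]; ring
  have expand : a*(lf s - c/2*s^2) + b*(lf t - c/2*t^2)
      = a*lf s + b*lf t - (c/2*(a*s^2+b*t^2)) := by ring
  rw [expand] at hineq
  linarith [hineq, hid2]


end Aux

set_option maxHeartbeats 1000000 in
/-- **Lemma (excess risk lower bound from the distance to the optimum, logistic setting).**
If `‖θ − θ*‖ > ε` then `L(θ) − L(θ*) > Λ_min ε² / (4(1 + e^{D_X(‖θ*‖ + ε)}))`. -/
theorem logistic_excess_risk_lower_bound
    {Ω : Type*} [MeasurableSpace Ω] (μ : Measure Ω) [IsProbabilityMeasure μ]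
    {d : ℕ} (hd : 1 ≤ d)
    (X : Ω → Fin d → ℝ) (y : Ω → ℝ) (hXmeas : Measurable X) (hymeas : Measurable y)
    (hy : ∀ᵐ ω ∂μ, y ω = 1 ∨ y ω = -1)
    (DX : ℝ) (hDX : 0 < DX) (hXbdd : ∀ᵐ ω ∂μ, euclNorm (X ω) ≤ DX)
    (Λmin : ℝ) (hΛ : Λmin = lambdaMin (Matrix.of fun i j => ∫ ω, X ω i * X ω j ∂μ))
    (hΛpos : 0 < Λmin)
    (L : (Fin d → ℝ) → ℝ)
    (hL : ∀ θ, L θ = ∫ ω, Real.log (1 + Real.exp (-(y ω) * (θ ⬝ᵥ X ω))) ∂μ)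
    (θstar : Fin d → ℝ) (hmin : ∀ θ, L θstar ≤ L θ)
    (ε : ℝ) (hε : 0 < ε) (θ : Fin d → ℝ) (hfar : ε < euclNorm (θ - θstar)) :
    Λmin * ε ^ 2 / (4 * (1 + Real.exp (DX * (euclNorm θstar + ε)))) < L θ - L θstar := by
  -- basic setup
  have hDX0 : (0:ℝ) ≤ DX := hDX.le
  set Mb : ℝ := DX * (euclNorm θstar + ε) with hMbdef
  have hMbpos : 0 < Mb := by
    have := euclNorm_nonneg θstar
    have : 0 < euclNorm θstar + ε := by linarith
    exact mul_pos hDX this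
  set c : ℝ := (2*(1+Real.exp Mb))⁻¹ with hcdef
  have hexpMb : (0:ℝ) < 1 + Real.exp Mb := one_add_exp_pos Mb
  have hcpos : 0 < c := by rw [hcdef]; positivity
  set R : ℝ := euclNorm (θ - θstar) with hRdef
  have hRpos : 0 < R := lt_trans hε hfar
  set t0 : ℝ := ε / R with ht0def
  have ht0pos : 0 < t0 := div_pos hε hRpos
  have ht0lt1 : t0 < 1 := (div_lt_one hRpos).2 hfar
  set w : Fin d → ℝ := t0 • (θ - θstar) with hwdef
  set θε : Fin d → ℝ := θstar + w with hθεdef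
  have hwnorm : euclNorm w = ε := by
    rw [hwdef, euclNorm_smul, abs_of_pos ht0pos, ← hRdef, ht0def, div_mul_cancel₀ _ hRpos.ne']
  have hθεnorm : euclNorm θε ≤ euclNorm θstar + ε := by
    calc euclNorm θε ≤ euclNorm θstar + euclNorm w := euclNorm_add_le _ _
      _ = euclNorm θstar + ε := by rw [hwnorm]
  -- measurability
  have hdotmeas : ∀ v : Fin d → ℝ, Measurable fun ω => v ⬝ᵥ X ω := by
    intro v
    show Measurable fun ω => ∑ i, v i * X ω i
    exact Finset.measurable_sum _ fun i _ =>
      measurable_const.mul ((measurable_pi_apply i).comp hXmeas)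
  have hlfdiff : Differentiable ℝ lf := fun s => (lf_hasDerivAt s).differentiableAt
  have hlfc : Continuous lf := hlfdiff.continuous
  set ℓ : (Fin d → ℝ) → Ω → ℝ := fun v ω => lf (y ω * (v ⬝ᵥ X ω)) with hℓdef
  have hLrw : ∀ v, L v = ∫ ω, ℓ v ω ∂μ := by
    intro v
    rw [hL]
    simp only [hℓdef, lf, neg_mul]
  have hmeasℓ : ∀ v, Measurable (ℓ v) := fun v =>
    hlfc.measurable.comp (hymeas.mul (hdotmeas v))
  have hgood : ∀ᵐ ω ∂μ, (y ω = 1 ∨ y ω = -1) ∧ euclNorm (X ω) ≤ DX := hy.and hXbdd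
  -- a.e. bound on the argument
  have haux : ∀ v : Fin d → ℝ, ∀ᵐ ω ∂μ, |y ω * (v ⬝ᵥ X ω)| ≤ euclNorm v * DX := by
    intro v
    filter_upwards [hgood] with ω hω
    obtain ⟨hyω, hXω⟩ := hω
    have hyab : |y ω| = 1 := by rcases hyω with h | h <;> simp [h]
    rw [abs_mul, hyab, one_mul]
    calc |v ⬝ᵥ X ω| ≤ euclNorm v * euclNorm (X ω) := abs_dotProduct_le _ _
      _ ≤ euclNorm v * DX := by
          have := euclNorm_nonneg v
          exact mul_le_mul_of_nonneg_left hXω this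
  -- integrability
  have hInt : ∀ v, Integrable (ℓ v) μ := by
    intro v
    refine ⟨(hmeasℓ v).aestronglyMeasurable, HasFiniteIntegral.of_bounded
      (C := Real.log 2 + euclNorm v * DX) ?_⟩
    filter_upwards [haux v] with ω hω
    rw [Real.norm_eq_abs, abs_of_nonneg (lf_nonneg _)]
    calc lf (y ω * (v ⬝ᵥ X ω)) ≤ Real.log 2 + |y ω * (v ⬝ᵥ X ω)| := lf_le _
      _ ≤ Real.log 2 + euclNorm v * DX := by linarith
  -- the quadratic integrand
  set q : Ω → ℝ := fun ω => (w ⬝ᵥ X ω)^2 with hqdef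
  have hq_meas : Measurable q := (hdotmeas w).pow_const 2
  have hq_int : Integrable q μ := by
    refine ⟨hq_meas.aestronglyMeasurable, HasFiniteIntegral.of_bounded (C := (ε * DX)^2) ?_⟩
    filter_upwards [hgood] with ω hω
    obtain ⟨_, hXω⟩ := hω
    have h1 : |w ⬝ᵥ X ω| ≤ ε * DX := by
      calc |w ⬝ᵥ X ω| ≤ euclNorm w * euclNorm (X ω) := abs_dotProduct_le _ _
        _ ≤ ε * DX := by
            rw [hwnorm]
            exact mul_le_mul_of_nonneg_left hXω hε.le
    have h2 : (w ⬝ᵥ X ω)^2 ≤ (ε*DX)^2 := by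
      nlinarith [abs_nonneg (w ⬝ᵥ X ω), sq_abs (w ⬝ᵥ X ω)]
    show ‖(w ⬝ᵥ X ω)^2‖ ≤ (ε*DX)^2
    rw [Real.norm_eq_abs, abs_of_nonneg (sq_nonneg _)]
    exact h2
  set Q : ℝ := ∫ ω, q ω ∂μ with hQdef
  have hQnonneg : 0 ≤ Q := integral_nonneg fun ω => sq_nonneg _
  -- Q as a quadratic form
  set Mmat : Matrix (Fin d) (Fin d) ℝ := Matrix.of fun i j => ∫ ω, X ω i * X ω j ∂μ with hMmat
  have hsym : Mmat.IsHermitian := by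
    show Mmatᴴ = Mmat
    ext i j
    simp only [Matrix.conjTranspose_apply, hMmat, Matrix.of_apply, star_trivial]
    exact integral_congr_ae (Filter.Eventually.of_forall fun ω => mul_comm _ _)
  have hXij_int : ∀ i j : Fin d, Integrable (fun ω => X ω i * X ω j) μ := by
    intro i j
    refine ⟨((measurable_pi_apply i).comp hXmeas).mul
      ((measurable_pi_apply j).comp hXmeas) |>.aestronglyMeasurable,
      HasFiniteIntegral.of_bounded (C := DX * DX) ?_⟩
    filter_upwards [hXbdd] with ω hXω
    rw [Real.norm_eq_abs, abs_mul]
    have hi : |X ω i| ≤ DX := le_trans (abs_apply_le_euclNorm _ i) hXω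
    have hj : |X ω j| ≤ DX := le_trans (abs_apply_le_euclNorm _ j) hXω
    exact mul_le_mul hi hj (abs_nonneg _) hDX0
  have hQeq : Q = w ⬝ᵥ Mmat.mulVec w := by
    have hqexp : ∀ ω, q ω = ∑ i, ∑ j, (w i * w j) * (X ω i * X ω j) := by
      intro ω
      show (w ⬝ᵥ X ω)^2 = _
      rw [sq, dotProduct, Finset.sum_mul_sum]
      exact Finset.sum_congr rfl fun i _ => Finset.sum_congr rfl fun j _ => by ring
    rw [hQdef]
    calc (∫ ω, q ω ∂μ) = ∫ ω, ∑ i, ∑ j, (w i * w j) * (X ω i * X ω j) ∂μ := by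
          exact integral_congr_ae (Filter.Eventually.of_forall hqexp)
      _ = ∑ i, ∑ j, (w i * w j) * ∫ ω, X ω i * X ω j ∂μ := by
          rw [integral_finset_sum _ fun i _ => integrable_finset_sum _
            fun j _ => (hXij_int i j).const_mul _]
          exact Finset.sum_congr rfl fun i _ => by
            rw [integral_finset_sum _ fun j _ => (hXij_int i j).const_mul _]
            exact Finset.sum_congr rfl fun j _ => integral_const_mul _ _
      _ = w ⬝ᵥ Mmat.mulVec w := by
          simp only [dotProduct, Matrix.mulVec, hMmat, Matrix.of_apply, Finset.mul_sum]
          exact Finset.sum_congr rfl fun i _ => Finset.sum_congr rfl fun j _ => by ring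
  have hQlb : Λmin * ε^2 ≤ Q := by
    have hkey := lambdaMin_quadform hd Mmat hsym w
    have hsum : ∑ i, w i ^ 2 = ε ^ 2 := by rw [← euclNorm_sq, hwnorm]
    rw [hsum] at hkey
    rw [hQeq, hΛ]
    exact hkey
  -- dot product algebra
  have hdotlin : ∀ (r1 r2 : ℝ) (u v : Fin d → ℝ) (z : Fin d → ℝ),
      (r1 • u + r2 • v) ⬝ᵥ z = r1 * (u ⬝ᵥ z) + r2 * (v ⬝ᵥ z) := by
    intro r1 r2 u v z
    rw [add_dotProduct, smul_dotProduct, smul_dotProduct, smul_eq_mul, smul_eq_mul]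
  -- Step A: strong convexity estimate for each a ∈ (0,1)
  have keyA : ∀ a : ℝ, 0 < a → a < 1 → c/2 * (1-a) * Q ≤ L θε - L θstar := by
    intro a ha0 ha1
    set θmid : Fin d → ℝ := (1-a) • θstar + a • θε with hθmid
    have hae : ∀ᵐ ω ∂μ, ℓ θmid ω + (c/2*((1-a)*a)) * q ω
        ≤ (1-a) * ℓ θstar ω + a * ℓ θε ω := by
      filter_upwards [hgood, haux θstar, haux θε] with ω hω hsb htb
      obtain ⟨hyω, hXω⟩ := hω
      set s : ℝ := y ω * (θstar ⬝ᵥ X ω) with hsdefn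
      set t : ℝ := y ω * (θε ⬝ᵥ X ω) with htdefn
      have hsMb : |s| ≤ Mb := by
        refine le_trans hsb ?_
        rw [hMbdef]
        have h1 := euclNorm_nonneg θstar
        nlinarith
      have htMb : |t| ≤ Mb := by
        refine le_trans htb ?_
        rw [hMbdef, mul_comm DX]
        exact mul_le_mul_of_nonneg_right hθεnorm hDX0
      have hstrong := lf_strong Mb hMbpos hsMb htMb (by linarith : (0:ℝ) ≤ 1-a) ha0.le
        (by ring)
      have hmid : y ω * (θmid ⬝ᵥ X ω) = (1-a)*s + a*t := by
        rw [hθmid, hdotlin]; ring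
      have hy2 : (y ω)^2 = 1 := by rcases hyω with h | h <;> simp [h]
      have hq : (s - t)^2 = q ω := by
        have hst : s - t = y ω * ((θstar - θε) ⬝ᵥ X ω) := by
          rw [sub_dotProduct]; ring
        have hsub : θstar - θε = -w := by rw [hθεdef]; abel
        rw [hqdef, hst, hsub, neg_dotProduct, mul_pow, hy2]
        ring
      rw [hℓdef]
      simp only
      rw [hmid]
      have : c/2*((1-a)*a) * q ω = c/2 * ((1-a)*a*(s-t)^2) := by rw [hq]; ring
      rw [this]
      rw [← hcdef] at hstrong
      exact hstrong
    have hintL : Integrable (fun ω => ℓ θmid ω + (c/2*((1-a)*a)) * q ω) μ :=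
      (hInt θmid).add (hq_int.const_mul _)
    have hintR : Integrable (fun ω => (1-a) * ℓ θstar ω + a * ℓ θε ω) μ :=
      ((hInt θstar).const_mul _).add ((hInt θε).const_mul _)
    have hle := integral_mono_ae hintL hintR hae
    rw [integral_add (hInt θmid) (hq_int.const_mul _), integral_add
      ((hInt θstar).const_mul _) ((hInt θε).const_mul _), integral_const_mul,
      integral_const_mul, integral_const_mul] at hle
    rw [← hLrw, ← hLrw, ← hLrw, ← hQdef] at hle
    have hmid := hmin θmid
    -- a * ((c/2)*(1-a)*Q) ≤ a * (L θε - L θstar)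
    have h2 : a * (c/2 * (1-a) * Q) ≤ a * (L θε - L θstar) := by nlinarith [hmid, hle]
    exact le_of_mul_le_mul_left h2 ha0
  -- Step B: pass to the limit a → 0
  have keyB : c/2 * Q ≤ L θε - L θstar := by
    have hV0 : 0 ≤ L θε - L θstar := by have := hmin θε; linarith
    refine le_of_forall_pos_le_add fun η hη => ?_
    rcases le_or_gt (c/2 * Q) η with h | h
    · linarith
    · have hQpos : 0 < c/2 * Q := lt_trans hη h
      set a : ℝ := η / (c/2 * Q) with hadef
      have ha0 : 0 < a := div_pos hη hQpos
      have ha1 : a < 1 := (div_lt_one hQpos).2 h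
      have := keyA a ha0 ha1
      have haQ : a * (c/2 * Q) = η := div_mul_cancel₀ _ hQpos.ne'
      have hexp : c/2*(1-a)*Q = c/2*Q - a*(c/2*Q) := by ring
      linarith
  -- Step C: convexity towards θ
  have hθεcomb : θε = (1 - t0) • θstar + t0 • θ := by
    rw [hθεdef, hwdef]
    ext i
    simp only [Pi.add_apply, Pi.smul_apply, Pi.sub_apply, smul_eq_mul]
    ring
  have keyC : L θε ≤ (1 - t0) * L θstar + t0 * L θ := by
    have hae : ∀ᵐ ω ∂μ, ℓ θε ω ≤ (1-t0) * ℓ θstar ω + t0 * ℓ θ ω := by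
      filter_upwards [] with ω
      have hcomb := lf_convexOn.2 (Set.mem_univ (y ω * (θstar ⬝ᵥ X ω)))
        (Set.mem_univ (y ω * (θ ⬝ᵥ X ω))) (by linarith : (0:ℝ) ≤ 1 - t0) ht0pos.le (by ring)
      simp only [smul_eq_mul] at hcomb
      have harg : y ω * (θε ⬝ᵥ X ω)
          = (1-t0) * (y ω * (θstar ⬝ᵥ X ω)) + t0 * (y ω * (θ ⬝ᵥ X ω)) := by
        rw [hθεcomb, hdotlin]; ring
      rw [hℓdef]
      simp only
      rw [harg]
      exact hcomb
    have hintR : Integrable (fun ω => (1-t0) * ℓ θstar ω + t0 * ℓ θ ω) μ :=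
      ((hInt θstar).const_mul _).add ((hInt θ).const_mul _)
    have hle := integral_mono_ae (hInt θε) hintR hae
    rw [integral_add ((hInt θstar).const_mul _) ((hInt θ).const_mul _),
      integral_const_mul, integral_const_mul, ← hLrw, ← hLrw, ← hLrw] at hle
    exact hle
  -- finish
  have hT0 : Λmin * ε ^ 2 / (4 * (1 + Real.exp Mb)) = c/2 * (Λmin * ε^2) := by
    rw [hcdef]
    field_simp
    ring
  rw [hT0]
  have hstep : c/2 * (Λmin * ε^2) ≤ c/2 * Q :=
    mul_le_mul_of_nonneg_left hQlb (by positivity : (0:ℝ) ≤ c/2)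
  have hVlb : c/2 * (Λmin * ε^2) ≤ L θε - L θstar := le_trans hstep keyB
  have hT0pos : 0 < c/2 * (Λmin * ε^2) := by positivity
  have ht0V : c/2 * (Λmin * ε^2) ≤ t0 * (L θ - L θstar) := by
    have hh : (1-t0)*L θstar + t0*L θ = L θstar + t0*(L θ - L θstar) := by ring
    linarith [keyC, hh]
  have h2 : 0 < t0 * (L θ - L θstar) := lt_of_lt_of_le hT0pos ht0V
  have hVpos : 0 < L θ - L θstar := by
    rcases lt_or_ge 0 (L θ - L θstar) with h | h
    · exact h
    · exact absurd h2 (not_lt.2 (mul_nonpos_of_nonneg_of_nonpos ht0pos.le h))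
  have h3 : t0 * (L θ - L θstar) < 1 * (L θ - L θstar) :=
    mul_lt_mul_of_pos_right ht0lt1 hVpos
  rw [one_mul] at h3
  linarith
end
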